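/- Let C ⊆ V be independent in G. The set {δ_x : x ∈ C} ∪ {e_C^{{y}} : y ∈ V∖C} of |V| probability distributions is affinely independent, and its convex hull is a (|V|-1)-simplex contained in M(G,C). -/

import Mathlib

/-- The polytope of `C`-modes of a graph `G`, inside the probability simplex. -/
def modePolytope {V : Type*} [Fintype V] (G : SimpleGraph V) (C : Set V) :
    Set (V → ℝ) :=
  {p | (∀ v, 0 ≤ p v) ∧ (∑ v, p v = 1) ∧ ∀ x ∈ C, ∀ y, G.Adj x y → p y ≤ p x}

/-- The uniform probability distribution on a finite subset. -/
noncomputable def uniformOn {V : Type*} [DecidableEq V] (s : Finset V) : V → ℝ :=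
  fun v => if v ∈ s then (s.card : ℝ)⁻¹ else 0

/-- For an independent `C`, the family consisting of `δ_x` for `x ∈ C` and of the
uniform distributions on `{y} ∪ N_C({y})` for `y ∈ V∖C` is an affinely independent
family of `|V|` points whose convex hull is a `(|V|-1)`-simplex inside `M(G,C)`. -/
theorem affineIndependent_subsimplex_of_modePolytope {V : Type*} [Fintype V]
    [DecidableEq V] (G : SimpleGraph V) [DecidableRel G.Adj] (C : Finset V)
    (hInd : ∀ x ∈ C, ∀ y ∈ C, ¬ G.Adj x y)
    (f : V → V → ℝ)
    (hf : ∀ x, f x = if x ∈ C then uniformOn {x}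
        else uniformOn (insert x (C.filter fun z => G.Adj z x))) :
    AffineIndependent ℝ f ∧ convexHull ℝ (Set.range f) ⊆ modePolytope G ↑C := by
  classical
  set S : V → Finset V := fun y => insert y (C.filter fun z => G.Adj z y) with hS
  have hself : ∀ x, x ∈ S x := fun x => Finset.mem_insert_self _ _
  have hcard : ∀ x, 0 < (S x).card := fun x => Finset.card_pos.2 ⟨x, hself x⟩
  -- unified formula
  have hfx : ∀ x, f x = uniformOn (S x) := by
    intro x
    rw [hf]
    by_cases hx : x ∈ C
    · rw [if_pos hx]
      have : S x = {x} := by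
        apply Finset.Subset.antisymm
        · intro z hz
          rcases Finset.mem_insert.1 hz with h | h
          · simp [h]
          · rcases Finset.mem_filter.1 h with ⟨hzC, hadj⟩
            exact absurd hadj (hInd z hzC x hx)
        · intro z hz
          rw [Finset.mem_singleton] at hz
          simp [hz, hself]
      rw [this]
    · rw [if_neg hx]
  -- membership in S x
  have hmemS : ∀ {v x : V}, v ∈ S x → v = x ∨ (v ∈ C ∧ G.Adj v x) := by
    intro v x h
    rcases Finset.mem_insert.1 h with h | h
    · exact Or.inl h
    · exact Or.inr (Finset.mem_filter.1 h)
  have hfval : ∀ x v, f x v = if v ∈ S x then ((S x).card : ℝ)⁻¹ else 0 := by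
    intro x v; rw [hfx x]; rfl
  constructor
  · rw [affineIndependent_iff]
    intro s w hw0 hsum
    have hcoord : ∀ v, ∑ x ∈ s, w x * f x v = 0 := by
      intro v
      have := congrFun hsum v
      rw [Finset.sum_apply] at this
      simpa using this
    -- step 1 : w vanishes outside C
    have h1 : ∀ v ∈ s, v ∉ C → w v = 0 := by
      intro v hv hvC
      have hsum' : ∑ x ∈ s, w x * f x v = w v * ((S v).card : ℝ)⁻¹ := by
        rw [Finset.sum_eq_single v]
        · rw [hfval, if_pos (hself v)]
        · intro x hx hxv
          rw [hfval]
          have : v ∉ S x := by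
            intro hmem
            rcases hmemS hmem with h | h
            · exact hxv h.symm
            · exact hvC h.1
          rw [if_neg this, mul_zero]
        · intro h; exact absurd hv h
      have := (hcoord v).symm.trans hsum'
      have hc : ((S v).card : ℝ)⁻¹ ≠ 0 := by
        exact inv_ne_zero (Nat.cast_ne_zero.2 (hcard v).ne')
      exact (mul_eq_zero.1 this.symm).resolve_right hc
    intro v hv
    by_cases hvC : v ∈ C
    · have hsum' : ∑ x ∈ s, w x * f x v = w v * ((S v).card : ℝ)⁻¹ := by
        rw [Finset.sum_eq_single v]
        · rw [hfval, if_pos (hself v)]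
        · intro x hx hxv
          rw [hfval]
          by_cases hmem : v ∈ S x
          · rcases hmemS hmem with h | h
            · exact absurd h.symm hxv
            · have hxC : x ∉ C := fun hxC => hInd v hvC x hxC h.2
              rw [h1 x hx hxC, zero_mul]
          · rw [if_neg hmem, mul_zero]
        · intro h; exact absurd hv h
      have := (hcoord v).symm.trans hsum'
      have hc : ((S v).card : ℝ)⁻¹ ≠ 0 :=
        inv_ne_zero (Nat.cast_ne_zero.2 (hcard v).ne')
      exact (mul_eq_zero.1 this.symm).resolve_right hc
    · exact h1 v hv hvC
  · -- convex hull part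
    have hmem : ∀ x, f x ∈ modePolytope G ↑C := by
      intro x
      rw [hfx x]
      refine ⟨?_, ?_, ?_⟩
      · intro v
        unfold uniformOn
        split
        · exact inv_nonneg.2 (Nat.cast_nonneg _)
        · exact le_refl 0
      · have : ∑ v, uniformOn (S x) v = ∑ v ∈ S x, ((S x).card : ℝ)⁻¹ := by
          unfold uniformOn
          rw [Finset.sum_ite_mem, Finset.univ_inter]
        rw [this, Finset.sum_const, nsmul_eq_mul]
        exact mul_inv_cancel₀ (Nat.cast_ne_zero.2 (hcard x).ne')
      · intro a ha y hadj
        have haC : a ∈ C := ha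
        unfold uniformOn
        by_cases hy : y ∈ S x
        · rcases hmemS hy with h | h
          · have haS : a ∈ S x := by
              apply Finset.mem_insert_of_mem
              exact Finset.mem_filter.2 ⟨haC, h ▸ hadj⟩
            rw [if_pos hy, if_pos haS]
          · exact absurd hadj (hInd a haC y h.1)
        · rw [if_neg hy]
          split
          · exact inv_nonneg.2 (Nat.cast_nonneg _)
          · exact le_refl 0
    have hconv : Convex ℝ (modePolytope G ↑C) := by
      intro p hp q hq a b ha hb hab
      obtain ⟨hp0, hp1, hpm⟩ := hp
      obtain ⟨hq0, hq1, hqm⟩ := hq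
      refine ⟨?_, ?_, ?_⟩
      · intro v
        have := add_nonneg (mul_nonneg ha (hp0 v)) (mul_nonneg hb (hq0 v))
        simpa using this
      · have : ∑ v, (a * p v + b * q v) = a * ∑ v, p v + b * ∑ v, q v := by
          rw [Finset.sum_add_distrib, ← Finset.mul_sum, ← Finset.mul_sum]
        simp only [Pi.add_apply, Pi.smul_apply, smul_eq_mul]
        rw [this, hp1, hq1, mul_one, mul_one, hab]
      · intro x hx y hadj
        have h1 := hpm x hx y hadj
        have h2 := hqm x hx y hadj
        simp only [Pi.add_apply, Pi.smul_apply, smul_eq_mul]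
        exact add_le_add (mul_le_mul_of_nonneg_left h1 ha) (mul_le_mul_of_nonneg_left h2 hb)
    exact convexHull_min (Set.range_subset_iff.2 hmem) hconv
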